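/- Let a0 ≤ a1 be reals, let s ∈ ℝ, and let Ψ : [a0,a1] → Set ℝ be a correspondence with nonempty convex values and compact graph. If there exist s0 ∈ Ψ(a0) and s1 ∈ Ψ(a1) with s0 ≤ s ≤ s1, then there exists a ∈ [a0,a1] with s ∈ Ψ(a). -/
import Mathlib


theorem stmt9 (a0 a1 s s0 s1 : ℝ) (h01 : a0 ≤ a1)
    (Ψ : ℝ → Set ℝ)
    (hne : ∀ a ∈ Set.Icc a0 a1, (Ψ a).Nonempty)
    (hconv : ∀ a ∈ Set.Icc a0 a1, Convex ℝ (Ψ a))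
    (hgraph : IsCompact {p : ℝ × ℝ | p.1 ∈ Set.Icc a0 a1 ∧ p.2 ∈ Ψ p.1})
    (hs0 : s0 ∈ Ψ a0) (hs1 : s1 ∈ Ψ a1) (h0 : s0 ≤ s) (h1 : s ≤ s1) :
    ∃ a ∈ Set.Icc a0 a1, s ∈ Ψ a := by
  set G := {p : ℝ × ℝ | p.1 ∈ Set.Icc a0 a1 ∧ p.2 ∈ Ψ p.1} with hG
  set B := Prod.fst '' (G ∩ {p : ℝ × ℝ | p.2 ≤ s}) with hB
  set C := Prod.fst '' (G ∩ {p : ℝ × ℝ | s ≤ p.2}) with hC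
  have hBc : IsCompact B :=
    (hgraph.inter_right (isClosed_le continuous_snd continuous_const)).image continuous_fst
  have hCc : IsCompact C :=
    (hgraph.inter_right (isClosed_le continuous_const continuous_snd)).image continuous_fst
  have hcover : Set.Icc a0 a1 ⊆ B ∪ C := by
    intro a ha
    obtain ⟨t, ht⟩ := hne a ha
    rcases le_total t s with h | h
    · exact Or.inl ⟨(a, t), ⟨⟨ha, ht⟩, h⟩, rfl⟩
    · exact Or.inr ⟨(a, t), ⟨⟨ha, ht⟩, h⟩, rfl⟩
  have hBne : (Set.Icc a0 a1 ∩ B).Nonempty :=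
    ⟨a0, ⟨le_refl _, h01⟩, ⟨(a0, s0), ⟨⟨⟨le_refl _, h01⟩, hs0⟩, h0⟩, rfl⟩⟩
  have hCne : (Set.Icc a0 a1 ∩ C).Nonempty :=
    ⟨a1, ⟨h01, le_refl _⟩, ⟨(a1, s1), ⟨⟨⟨h01, le_refl _⟩, hs1⟩, h1⟩, rfl⟩⟩
  obtain ⟨a, ha, haB, haC⟩ :=
    isPreconnected_closed_iff.mp isPreconnected_Icc B C hBc.isClosed hCc.isClosed
      hcover hBne hCne
  obtain ⟨⟨x, t⟩, ⟨⟨haI, htΨ⟩, hts⟩, h'⟩ := haB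
  obtain ⟨⟨y, t'⟩, ⟨⟨_, ht'Ψ⟩, hst'⟩, h''⟩ := haC
  simp only at h' h''
  subst h'
  subst h''
  exact ⟨y, haI, (hconv y haI).ordConnected.out htΨ ht'Ψ ⟨hts, hst'⟩⟩
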